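/- arXiv:1403.2125 — 2 statements merged into one kernel-verified Lean document; each statement's English description precedes it below -/
import Mathlib

section
/- Let P be a two-orbit j-intransitive convex d-polytope and let Φ be any flag of P. Then for any i ≠ j (0 ≤ i ≤ d−1), the i-adjacent flag Φ^i is in the same flag orbit as Φ; that is, there exists a symmetry ρ ∈ G(P) with ρ(Φ) = Φ^i. -/
open scoped RealInnerProductSpace Pointwise

noncomputable section

/-- Euclidean `d`-space. -/
abbrev E (d : ℕ) := EuclideanSpace ℝ (Fin d)

/-- A convex `d`-polytope: the convex hull of a finite set of points in Euclidean
`d`-space whose affine hull is the whole space. -/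
def IsConvexPolytope (d : ℕ) (P : Set (E d)) : Prop :=
  (∃ S : Finset (E d), P = convexHull ℝ (S : Set (E d))) ∧ affineSpan ℝ P = ⊤

/-- The faces of `P`: the intersections of `P` with supporting hyperplanes, together
with the empty set and `P` itself; these are exactly the exposed faces of `P`. -/
def Faces (d : ℕ) (P : Set (E d)) : Type := {F : Set (E d) // IsExposed ℝ P F}

instance (d : ℕ) (P : Set (E d)) : PartialOrder (Faces d P) :=
  Subtype.partialOrder _

/-- A flag of `P`: a maximal chain in the face lattice of `P`. -/
abbrev PolyFlag (d : ℕ) (P : Set (E d)) := Flag (Faces d P)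

/-- `g` is a symmetry of `P`: a Euclidean isometry carrying `P` onto itself. -/
def IsSymmetry (d : ℕ) (P : Set (E d)) (g : E d ≃ᵢ E d) : Prop := g '' P = P

/-- The collection of faces (as subsets of space) obtained by applying `g` to the
faces of the flag `Φ`. -/
def flagImage (d : ℕ) (P : Set (E d)) (g : E d ≃ᵢ E d) (Φ : PolyFlag d P) :
    Set (Set (E d)) :=
  (fun F : Set (E d) => g '' F) '' (Subtype.val '' (Φ : Set (Faces d P)))

/-- Two flags lie in the same orbit of the symmetry group `G(P)`. -/
def FlagEquiv (d : ℕ) (P : Set (E d)) (Φ Ψ : PolyFlag d P) : Prop :=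
  ∃ g : E d ≃ᵢ E d, IsSymmetry d P g ∧
    flagImage d P g Φ = Subtype.val '' (Ψ : Set (Faces d P))

/-- `P` is a two-orbit polytope: the symmetry group has exactly two orbits on flags. -/
def IsTwoOrbit (d : ℕ) (P : Set (E d)) : Prop :=
  ∃ Φ Ψ : PolyFlag d P, ¬ FlagEquiv d P Φ Ψ ∧
    ∀ Ω : PolyFlag d P, FlagEquiv d P Ω Φ ∨ FlagEquiv d P Ω Ψ

/-- `F` is a face of `P` of rank `j`: the empty face has rank `-1`, and a nonempty face
has rank the dimension of its affine hull. -/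
def IsFaceOfRank (d : ℕ) (P : Set (E d)) (F : Set (E d)) (j : ℤ) : Prop :=
  IsExposed ℝ P F ∧
    ((j = -1 ∧ F = ∅) ∨
      (F.Nonempty ∧ j = Module.finrank ℝ (affineSpan ℝ F).direction))

/-- The symmetry group of `P` is transitive on the faces of rank `j`. -/
def TransitiveOnRank (d : ℕ) (P : Set (E d)) (j : ℤ) : Prop :=
  ∀ F G : Set (E d), IsFaceOfRank d P F j → IsFaceOfRank d P G j →
    ∃ g : E d ≃ᵢ E d, IsSymmetry d P g ∧ g '' F = G

/-- `P` is a two-orbit `j`-intransitive polytope: it has exactly two flag orbits, its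
symmetry group is not transitive on the `j`-faces, but is transitive on the `i`-faces
for every `i ≠ j` with `0 ≤ i ≤ d - 1`. -/
def IsJIntransitive (d : ℕ) (P : Set (E d)) (j : ℤ) : Prop :=
  IsTwoOrbit d P ∧ ¬ TransitiveOnRank d P j ∧
    ∀ i : ℤ, 0 ≤ i → i ≤ (d : ℤ) - 1 → i ≠ j → TransitiveOnRank d P i

/-- Flags `Φ` and `Ψ` are `i`-adjacent: they are distinct, and they share all faces
whose rank differs from `i`. -/
def IAdjacent (d : ℕ) (P : Set (E d)) (i : ℤ) (Φ Ψ : PolyFlag d P) : Prop :=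
  Φ ≠ Ψ ∧ ∀ (F : Faces d P) (r : ℤ),
    IsFaceOfRank d P F.val r → r ≠ i → (F ∈ Φ ↔ F ∈ Ψ)

namespace ClaimAux

variable {d : ℕ} {P : Set (E d)}

lemma symmetry_refl : IsSymmetry d P (IsometryEquiv.refl (E d)) := by
  unfold IsSymmetry
  exact Set.image_id' P

lemma symmetry_symm {g : E d ≃ᵢ E d} (h : IsSymmetry d P g) : IsSymmetry d P g.symm := by
  unfold IsSymmetry at *
  conv_lhs => rw [← h]
  ext x
  simp

lemma symmetry_trans {g₁ g₂ : E d ≃ᵢ E d} (h1 : IsSymmetry d P g₁) (h2 : IsSymmetry d P g₂) :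
    IsSymmetry d P (g₁.trans g₂) := by
  unfold IsSymmetry at *
  have : ⇑(g₁.trans g₂) '' P = ⇑g₂ '' (⇑g₁ '' P) := by
    ext x; simp [IsometryEquiv.trans_apply]
  rw [this, h1, h2]

lemma flagEquiv_refl (Φ : PolyFlag d P) : FlagEquiv d P Φ Φ := by
  refine ⟨IsometryEquiv.refl _, symmetry_refl, ?_⟩
  unfold flagImage
  have : (fun F : Set (E d) => ⇑(IsometryEquiv.refl (E d)) '' F) = fun F => F := by
    funext F; exact Set.image_id' F
  rw [this, Set.image_id']

lemma imSet_symm (g : E d ≃ᵢ E d) (S : Set (Set (E d))) :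
    (fun F => ⇑g.symm '' F) '' ((fun F : Set (E d) => ⇑g '' F) '' S) = S := by
  rw [Set.image_image]
  have : (fun F : Set (E d) => ⇑g.symm '' (⇑g '' F)) = fun F => F := by
    funext F; ext x; simp
  rw [this, Set.image_id']

lemma imSet_trans (g₁ g₂ : E d ≃ᵢ E d) (S : Set (Set (E d))) :
    (fun F : Set (E d) => ⇑(g₁.trans g₂) '' F) '' S
      = (fun F => ⇑g₂ '' F) '' ((fun F : Set (E d) => ⇑g₁ '' F) '' S) := by
  have h : (fun F : Set (E d) => ⇑(g₁.trans g₂) '' F)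
      = fun F : Set (E d) => ⇑g₂ '' (⇑g₁ '' F) := by
    funext F
    ext x
    constructor
    · rintro ⟨u, hu, rfl⟩; exact ⟨g₁ u, ⟨u, hu, rfl⟩, rfl⟩
    · rintro ⟨y, ⟨u, hu, rfl⟩, rfl⟩; exact ⟨u, hu, rfl⟩
  rw [h, Set.image_image]

lemma flagImage_trans (g₁ g₂ : E d ≃ᵢ E d) (Φ : PolyFlag d P) :
    flagImage d P (g₁.trans g₂) Φ = (fun F => ⇑g₂ '' F) '' (flagImage d P g₁ Φ) := by
  unfold flagImage
  exact imSet_trans g₁ g₂ _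

lemma flagEquiv_symm {Φ Ψ : PolyFlag d P} (h : FlagEquiv d P Φ Ψ) : FlagEquiv d P Ψ Φ := by
  obtain ⟨g, hg, him⟩ := h
  refine ⟨g.symm, symmetry_symm hg, ?_⟩
  calc flagImage d P g.symm Ψ
      = (fun F => ⇑g.symm '' F) '' (Subtype.val '' (Ψ : Set (Faces d P))) := rfl
    _ = (fun F => ⇑g.symm '' F) '' (flagImage d P g Φ) := by rw [him]
    _ = Subtype.val '' (Φ : Set (Faces d P)) := imSet_symm g _

lemma flagEquiv_trans {Φ Ψ Ω : PolyFlag d P} (h1 : FlagEquiv d P Φ Ψ)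
    (h2 : FlagEquiv d P Ψ Ω) : FlagEquiv d P Φ Ω := by
  obtain ⟨g₁, hg₁, him₁⟩ := h1
  obtain ⟨g₂, hg₂, him₂⟩ := h2
  refine ⟨g₁.trans g₂, symmetry_trans hg₁ hg₂, ?_⟩
  calc flagImage d P (g₁.trans g₂) Φ
      = (fun F => ⇑g₂ '' F) '' (flagImage d P g₁ Φ) := flagImage_trans g₁ g₂ Φ
    _ = (fun F => ⇑g₂ '' F) '' (Subtype.val '' (Ψ : Set (Faces d P))) := by rw [him₁]
    _ = flagImage d P g₂ Ψ := rfl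
    _ = Subtype.val '' (Ω : Set (Faces d P)) := him₂

lemma exists_flag_mem (F : Faces d P) : ∃ Ω : PolyFlag d P, F ∈ Ω := by
  obtain ⟨M, hM, hsub⟩ := (IsChain.singleton (r := (· ≤ ·)) (a := F)).exists_maxChain
  exact ⟨Flag.ofIsMaxChain M hM, hsub rfl⟩

lemma lin_apply (g : E d ≃ᵢ E d) (u : E d) :
    g.toRealLinearIsometryEquiv u = g u - g 0 :=
  IsometryEquiv.toRealLinearIsometryEquiv_apply g u

lemma isExposed_image {g : E d ≃ᵢ E d} (hg : IsSymmetry d P g) {F : Set (E d)}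
    (hF : IsExposed ℝ P F) : IsExposed ℝ P (⇑g '' F) := by
  intro hne
  have hFne : F.Nonempty := by
    obtain ⟨x, u, hu, rfl⟩ := hne
    exact ⟨u, hu⟩
  obtain ⟨l, hl⟩ := hF hFne
  set A := g.toRealLinearIsometryEquiv with hA
  refine ⟨l.comp (A.symm.toContinuousLinearEquiv : E d →L[ℝ] E d), ?_⟩
  have hPg : ⇑g '' P = P := hg
  have key : ∀ u : E d, l (A.symm (g u)) = l u + l (A.symm (g 0)) := by
    intro u
    have h1 : A.symm (g u) = u + A.symm (g 0) := by
      have h2 : g u = A u + g 0 := by rw [lin_apply]; abel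
      rw [h2, map_add]
      simp
    rw [h1, map_add]
  ext x
  simp only [Set.mem_setOf_eq, ContinuousLinearMap.comp_apply,
    ContinuousLinearEquiv.coe_coe, LinearIsometryEquiv.coe_toContinuousLinearEquiv]
  constructor
  · rintro ⟨u, hu, rfl⟩
    rw [hl] at hu
    obtain ⟨huP, hmax⟩ := hu
    refine ⟨by rw [← hPg]; exact ⟨u, huP, rfl⟩, ?_⟩
    intro y hy
    rw [← hPg] at hy
    obtain ⟨v, hv, rfl⟩ := hy
    rw [key u, key v]
    have := hmax v hv
    linarith
  · rintro ⟨hxP, hmax⟩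
    have hxg : x ∈ ⇑g '' P := by rw [hPg]; exact hxP
    obtain ⟨u, hu, rfl⟩ := hxg
    refine ⟨u, ?_, rfl⟩
    rw [hl]
    refine ⟨hu, fun z hz => ?_⟩
    have hzP : g z ∈ P := by rw [← hPg]; exact ⟨z, hz, rfl⟩
    have := hmax (g z) hzP
    rw [key u, key z] at this
    linarith

lemma finrank_image (g : E d ≃ᵢ E d) (F : Set (E d)) :
    Module.finrank ℝ (affineSpan ℝ (⇑g '' F)).direction
      = Module.finrank ℝ (affineSpan ℝ F).direction := by
  have he : ⇑g '' F = ⇑(g.toRealAffineIsometryEquiv.toAffineEquiv.toAffineMap) '' F := by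
    congr 1
  rw [he, ← AffineSubspace.map_span, AffineSubspace.map_direction]
  have : (g.toRealAffineIsometryEquiv.toAffineEquiv.toAffineMap).linear
      = (g.toRealAffineIsometryEquiv.toAffineEquiv.linear : E d →ₗ[ℝ] E d) := rfl
  rw [this]
  exact LinearEquiv.finrank_map_eq _ _

lemma isFaceOfRank_image {g : E d ≃ᵢ E d} (hg : IsSymmetry d P g) {F : Set (E d)} {r : ℤ}
    (hF : IsFaceOfRank d P F r) : IsFaceOfRank d P (⇑g '' F) r := by
  obtain ⟨hexp, hr⟩ := hF
  refine ⟨isExposed_image hg hexp, ?_⟩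
  rcases hr with ⟨hj, rfl⟩ | ⟨hne, hj⟩
  · exact Or.inl ⟨hj, by simp⟩
  · refine Or.inr ⟨hne.image _, ?_⟩
    rw [hj, finrank_image]

lemma face_subset {F : Set (E d)} (hF : IsExposed ℝ P F) : F ⊆ P := by
  rcases F.eq_empty_or_nonempty with rfl | hne
  · exact Set.empty_subset P
  · obtain ⟨l, hl⟩ := hF hne
    rw [hl]; intro x hx; exact hx.1

lemma rank_unique {F G : Faces d P} {r : ℤ} (hFG : F ≤ G)
    (hF : IsFaceOfRank d P F.val r) (hG : IsFaceOfRank d P G.val r) : F = G := by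
  rcases hF.2 with ⟨hr, hFe⟩ | ⟨hFne, hFr⟩
  · rcases hG.2 with ⟨_, hGe⟩ | ⟨hGne, hGr⟩
    · exact Subtype.ext (hFe.trans hGe.symm)
    · exfalso; rw [hr] at hGr; omega
  · rcases hG.2 with ⟨hr, _⟩ | ⟨hGne, hGr⟩
    · exfalso; rw [hr] at hFr; omega
    · have hsub : F.val ⊆ G.val := hFG
      have hspan : affineSpan ℝ F.val ≤ affineSpan ℝ G.val := affineSpan_mono ℝ hsub
      have hdirle : (affineSpan ℝ F.val).direction ≤ (affineSpan ℝ G.val).direction :=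
        AffineSubspace.direction_le hspan
      have hfr : Module.finrank ℝ (affineSpan ℝ F.val).direction
          = Module.finrank ℝ (affineSpan ℝ G.val).direction := by omega
      have hdir : (affineSpan ℝ F.val).direction = (affineSpan ℝ G.val).direction :=
        Submodule.eq_of_le_of_finrank_eq hdirle hfr
      have hFne' := hFne
      obtain ⟨x₀, hx₀⟩ := hFne'
      have hspaneq : affineSpan ℝ F.val = affineSpan ℝ G.val :=
        AffineSubspace.ext_of_direction_eq hdir
          ⟨x₀, subset_affineSpan ℝ _ hx₀, subset_affineSpan ℝ _ (hsub hx₀)⟩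
      obtain ⟨l, hl⟩ := F.prop hFne
      have hx₀' : x₀ ∈ P ∧ ∀ y ∈ P, l y ≤ l x₀ := by rw [hl] at hx₀; exact hx₀
      refine Subtype.ext (Set.Subset.antisymm hsub fun y hy => ?_)
      have hyP : y ∈ P := face_subset G.prop hy
      have hyspan : y ∈ affineSpan ℝ F.val := by
        rw [hspaneq]; exact subset_affineSpan ℝ _ hy
      have hconst : l y = l x₀ := by
        refine affineSpan_induction (p := fun z => l z = l x₀) hyspan (fun z hz => ?_) ?_
        · rw [hl] at hz
          exact le_antisymm (hx₀'.2 z hz.1) (hz.2 x₀ hx₀'.1)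
        · intro c u v w hu hv hw
          have : u -ᵥ v = u - v := rfl
          simp only [this, vadd_eq_add, map_add, map_smul, map_sub, hu, hv, hw]
          simp
      rw [hl]
      exact ⟨hyP, fun z hz => hconst ▸ hx₀'.2 z hz⟩

lemma flag_push {g : E d ≃ᵢ E d} {Ω Ω' : PolyFlag d P}
    (him : flagImage d P g Ω = Subtype.val '' (Ω' : Set (Faces d P)))
    {F : Faces d P} (hF : F ∈ Ω) : ∃ H : Faces d P, H ∈ Ω' ∧ H.val = ⇑g '' F.val := by
  have hmem : ⇑g '' F.val ∈ flagImage d P g Ω := ⟨F.val, ⟨F, hF, rfl⟩, rfl⟩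
  rw [him] at hmem
  obtain ⟨H, hH, hHe⟩ := hmem
  exact ⟨H, hH, hHe⟩

lemma master {j : ℤ} {X Y Ω Ω' : PolyFlag d P}
    (hΩX : FlagEquiv d P Ω X) (hYΩ' : FlagEquiv d P Y Ω')
    (hXY : ∀ H : Faces d P, IsFaceOfRank d P H.val j → H ∈ X → H ∈ Y)
    {F G : Faces d P} (hF : F ∈ Ω) (hG : G ∈ Ω')
    (hFr : IsFaceOfRank d P F.val j) (hGr : IsFaceOfRank d P G.val j) :
    ∃ g : E d ≃ᵢ E d, IsSymmetry d P g ∧ ⇑g '' F.val = G.val := by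
  obtain ⟨g₁, hg₁, him₁⟩ := hΩX
  obtain ⟨g₂, hg₂, him₂⟩ := hYΩ'
  obtain ⟨H, hHX, hHval⟩ := flag_push him₁ hF
  have hHr : IsFaceOfRank d P H.val j := by
    rw [hHval]; exact isFaceOfRank_image hg₁ hFr
  have hHY : H ∈ Y := hXY H hHr hHX
  obtain ⟨H', hH', hH'val⟩ := flag_push him₂ hHY
  have hH'r : IsFaceOfRank d P H'.val j := by
    rw [hH'val]; exact isFaceOfRank_image hg₂ hHr
  have hEq : H' = G := by
    rcases eq_or_ne H' G with rfl | hne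
    · rfl
    · rcases Ω'.chain_le hH' hG hne with h | h
      · exact rank_unique h hH'r hGr
      · exact (rank_unique h hGr hH'r).symm
  refine ⟨g₁.trans g₂, symmetry_trans hg₁ hg₂, ?_⟩
  have hcomp : ⇑(g₁.trans g₂) '' F.val = ⇑g₂ '' (⇑g₁ '' F.val) := by
    ext x
    constructor
    · rintro ⟨u, hu, rfl⟩; exact ⟨g₁ u, ⟨u, hu, rfl⟩, rfl⟩
    · rintro ⟨y, ⟨u, hu, rfl⟩, rfl⟩; exact ⟨u, hu, rfl⟩
  rw [hcomp, ← hHval, ← hH'val, hEq]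

end ClaimAux

/-- **Claim 3.**
Let `P` be a two-orbit `j`-intransitive convex `d`-polytope and `Φ` any flag.  Then
for any `i ≠ j` with `0 ≤ i ≤ d - 1`, the `i`-adjacent flag `Φⁱ` is in the same flag
orbit as `Φ`: there is a symmetry `ρ ∈ G(P)` with `ρ(Φ) = Φⁱ`. -/


theorem adjacent_flag_same_orbit (d : ℕ) (P : Set (E d))
    (hP : IsConvexPolytope d P) (j : ℤ) (hPj : IsJIntransitive d P j)
    (i : ℤ) (hi0 : 0 ≤ i) (hid : i ≤ (d : ℤ) - 1) (hij : i ≠ j)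
    (Φ Ψ : PolyFlag d P) (hadj : IAdjacent d P i Φ Ψ) :
    FlagEquiv d P Φ Ψ := by
  classical
  by_contra hne
  obtain ⟨htwo, hnotj, _htrans⟩ := hPj
  obtain ⟨Φ₀, Ψ₀, hΦΨ₀, hall⟩ := htwo
  apply hnotj
  have hclass : ∀ Ω : PolyFlag d P, FlagEquiv d P Ω Φ ∨ FlagEquiv d P Ω Ψ := by
    intro Ω
    rcases hall Ω with hΩ | hΩ <;> rcases hall Φ with hΦ | hΦ <;> rcases hall Ψ with hΨ | hΨ
    all_goals first
      | (left; exact ClaimAux.flagEquiv_trans hΩ (ClaimAux.flagEquiv_symm hΦ))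
      | (right; exact ClaimAux.flagEquiv_trans hΩ (ClaimAux.flagEquiv_symm hΨ))
      | (exact absurd (ClaimAux.flagEquiv_trans hΦ (ClaimAux.flagEquiv_symm hΨ)) hne)
  intro Fs Gs hFs hGs
  obtain ⟨Ω, hΩF⟩ := ClaimAux.exists_flag_mem (⟨Fs, hFs.1⟩ : Faces d P)
  obtain ⟨Ω', hΩ'G⟩ := ClaimAux.exists_flag_mem (⟨Gs, hGs.1⟩ : Faces d P)
  have hadjiff : ∀ H : Faces d P, IsFaceOfRank d P H.val j → (H ∈ Φ ↔ H ∈ Ψ) :=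
    fun H hH => hadj.2 H j hH (Ne.symm hij)
  rcases hclass Ω with hΩc | hΩc <;> rcases hclass Ω' with hΩ'c | hΩ'c
  · exact ClaimAux.master hΩc (ClaimAux.flagEquiv_symm hΩ'c) (fun H _ h => h) hΩF hΩ'G hFs hGs
  · exact ClaimAux.master hΩc (ClaimAux.flagEquiv_symm hΩ'c)
      (fun H hH h => (hadjiff H hH).1 h) hΩF hΩ'G hFs hGs
  · exact ClaimAux.master hΩc (ClaimAux.flagEquiv_symm hΩ'c)
      (fun H hH h => (hadjiff H hH).2 h) hΩF hΩ'G hFs hGs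
  · exact ClaimAux.master hΩc (ClaimAux.flagEquiv_symm hΩ'c) (fun H _ h => h) hΩF hΩ'G hFs hGs
end
end

section
/- Let P be a two-orbit j-intransitive convex d-polytope, let G be a k-face and F an l-face of P with F ≤ G. If j ≤ l or k ≤ j, then the section G/F is a regular polytope. In particular, every i-face of P with i ≤ j is a regular polytope. -/
open scoped RealInnerProductSpace Pointwise

noncomputable section

/-- A regular polytope: the group of ambient isometries carrying `Q` onto itself is
transitive on the flags of `Q`. -/
def IsRegularSet (d : ℕ) (Q : Set (E d)) : Prop :=
  ∀ Φ Ψ : PolyFlag d Q, FlagEquiv d Q Φ Ψ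

/-- The faces of the section `G/F` of `P`: the faces of `P` lying between `F`
and `G`. -/
def SectionFaces (d : ℕ) (P F G : Set (E d)) : Type :=
  {H : Set (E d) // IsExposed ℝ P H ∧ F ⊆ H ∧ H ⊆ G}

instance (d : ℕ) (P F G : Set (E d)) : PartialOrder (SectionFaces d P F G) :=
  Subtype.partialOrder _

/-- A flag of the section `G/F`: a maximal chain of faces of `P` between `F` and `G`. -/
abbrev SectionFlag (d : ℕ) (P F G : Set (E d)) := Flag (SectionFaces d P F G)


open Classical in
def rk {d : ℕ} (H : Set (E d)) : ℤ :=
  if H.Nonempty then (Module.finrank ℝ (affineSpan ℝ H).direction : ℤ) else -1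
lemma rk_empty {d : ℕ} : rk (∅ : Set (E d)) = -1 := by simp [rk]
lemma rk_nonneg {d : ℕ} {H : Set (E d)} (h : H.Nonempty) : 0 ≤ rk H := by
  simp [rk, h]

lemma rk_eq_of_nonempty {d : ℕ} {H : Set (E d)} (h : H.Nonempty) :
    rk H = (Module.finrank ℝ (affineSpan ℝ H).direction : ℤ) := by simp [rk, h]

lemma neg_one_le_rk {d : ℕ} (H : Set (E d)) : -1 ≤ rk H := by
  rcases H.eq_empty_or_nonempty with h | h
  · simp [h, rk_empty]
  · exact le_trans (by norm_num) (rk_nonneg h)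

lemma rk_mono {d : ℕ} {A B : Set (E d)} (h : A ⊆ B) : rk A ≤ rk B := by
  rcases A.eq_empty_or_nonempty with hA | hA
  · simp only [hA, rk_empty]; exact neg_one_le_rk B
  · have hB : B.Nonempty := hA.mono h
    rw [rk_eq_of_nonempty hA, rk_eq_of_nonempty hB]
    exact_mod_cast Submodule.finrank_mono
      (AffineSubspace.direction_le (affineSpan_mono ℝ h))

lemma rk_image {d : ℕ} (g : E d ≃ᵢ E d) (H : Set (E d)) : rk (g '' H) = rk H := by
  have ha : ⇑g.toRealAffineIsometryEquiv = ⇑g := g.coeFn_toRealAffineIsometryEquiv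
  set f : E d →ᵃ[ℝ] E d := g.toRealAffineIsometryEquiv.toAffineEquiv.toAffineMap with hf
  have hcoe : ⇑f = ⇑g := ha
  rcases H.eq_empty_or_nonempty with h | h
  · simp [h]
  · have himg : (g '' H).Nonempty := h.image _
    have hspan : affineSpan ℝ (g '' H) = (affineSpan ℝ H).map f := by
      rw [AffineSubspace.map_span, hcoe]
    rw [rk, rk, if_pos h, if_pos himg, hspan, AffineSubspace.map_direction]
    congr 1
    exact (LinearEquiv.finrank_map_eq g.toRealAffineIsometryEquiv.toAffineEquiv.linear
      (affineSpan ℝ H).direction)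
/-- The level set of a continuous linear functional, as an affine subspace. -/
def lev {d : ℕ} (l : E d →L[ℝ] ℝ) (c : ℝ) : AffineSubspace ℝ (E d) where
  carrier := {x | l x = c}
  smul_vsub_vadd_mem' := by
    intro t p₁ p₂ p₃ h₁ h₂ h₃
    simp only [Set.mem_setOf_eq] at *
    simp [vsub_eq_sub, vadd_eq_add, map_add, map_sub, map_smul, h₁, h₂, h₃, smul_eq_mul]

lemma mem_lev {d : ℕ} {l : E d →L[ℝ] ℝ} {c : ℝ} {x : E d} : x ∈ lev l c ↔ l x = c := Iff.rfl

/-- An exposed face of `P` contained in a subset `A` of `P` is exposed in `A`. -/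
lemma isExposed_restrict {d : ℕ} {P A H : Set (E d)} (hH : IsExposed ℝ P H)
    (hHA : H ⊆ A) (hAP : A ⊆ P) : IsExposed ℝ A H := by
  intro hne
  obtain ⟨l, hl⟩ := hH hne
  refine ⟨l, ?_⟩
  obtain ⟨x₀, hx₀⟩ := hne
  have hx₀' := hl ▸ hx₀
  ext x
  constructor
  · intro hx
    have hx' := hl ▸ hx
    exact ⟨hHA hx, fun y hy => hx'.2 y (hAP hy)⟩
  · rintro ⟨hxA, hx⟩
    rw [hl]
    exact ⟨hAP hxA, fun y hy => le_trans (hx₀'.2 y hy) (hx x₀ (hHA hx₀))⟩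

/-- Two nested exposed faces of equal rank are equal. -/
lemma eq_of_subset_of_rk_eq {d : ℕ} {P A B : Set (E d)}
    (hA : IsExposed ℝ P A) (hB : IsExposed ℝ P B) (hAB : A ⊆ B) (hrk : rk A = rk B) :
    A = B := by
  rcases A.eq_empty_or_nonempty with hAe | hAne
  · rcases B.eq_empty_or_nonempty with hBe | hBne
    · rw [hAe, hBe]
    · rw [hAe, rk_empty] at hrk
      exact absurd hrk.symm (by have := rk_nonneg hBne; omega)
  · have hBne : B.Nonempty := hAne.mono hAB
    have hBP : B ⊆ P := hB.subset
    have hexp : IsExposed ℝ B A := isExposed_restrict hA hAB hBP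
    obtain ⟨l, hl⟩ := hexp hAne
    -- spans are equal
    have hle : affineSpan ℝ A ≤ affineSpan ℝ B := affineSpan_mono ℝ hAB
    have hdir : (affineSpan ℝ A).direction = (affineSpan ℝ B).direction := by
      apply Submodule.eq_of_le_of_finrank_eq (AffineSubspace.direction_le hle)
      rw [rk_eq_of_nonempty hAne, rk_eq_of_nonempty hBne] at hrk
      exact_mod_cast hrk
    obtain ⟨x₀, hx₀⟩ := hAne
    have hspan : affineSpan ℝ A = affineSpan ℝ B :=
      AffineSubspace.ext_of_direction_eq hdir
        ⟨x₀, subset_affineSpan ℝ A hx₀, subset_affineSpan ℝ B (hAB hx₀)⟩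
    -- l is constant on A, hence on span A = span B ⊇ B
    have hx₀A := hl ▸ hx₀
    have hAlev : A ⊆ (lev l (l x₀) : Set (E d)) := by
      intro x hx
      have hx' := hl ▸ hx
      exact le_antisymm (hx₀A.2 x hx'.1) (hx'.2 x₀ hx₀A.1)
    have hBlev : B ⊆ (lev l (l x₀) : Set (E d)) := by
      intro y hy
      have : affineSpan ℝ B ≤ lev l (l x₀) := hspan ▸ (affineSpan_le.2 hAlev)
      exact this (subset_affineSpan ℝ B hy)
    apply Set.Subset.antisymm hAB
    intro y hy
    rw [hl]
    exact ⟨hy, fun z hz => le_of_eq ((hBlev hz).trans (hBlev hy).symm)⟩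

lemma IsFaceOfRank.rk_eq {d : ℕ} {P C : Set (E d)} {i : ℤ}
    (h : IsFaceOfRank d P C i) : rk C = i := by
  rcases h.2 with ⟨hi, hC⟩ | ⟨hC, hi⟩
  · rw [hC, rk_empty, hi]
  · rw [hi]; simp [rk, hC]

lemma isSymmetry_refl (d : ℕ) (P : Set (E d)) : IsSymmetry d P (IsometryEquiv.refl (E d)) :=
  Set.image_id P

lemma isSymmetry_symm {d : ℕ} {P : Set (E d)} {g : E d ≃ᵢ E d} (h : IsSymmetry d P g) :
    IsSymmetry d P g.symm := by
  unfold IsSymmetry at *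
  conv_lhs => rw [← h]
  rw [← Set.image_comp]
  simp

lemma isSymmetry_trans {d : ℕ} {P : Set (E d)} {g₁ g₂ : E d ≃ᵢ E d}
    (h₁ : IsSymmetry d P g₁) (h₂ : IsSymmetry d P g₂) : IsSymmetry d P (g₁.trans g₂) := by
  unfold IsSymmetry at *
  have : ⇑(g₁.trans g₂) = ⇑g₂ ∘ ⇑g₁ := rfl
  rw [this, Set.image_comp, h₁, h₂]

lemma image_symm_image {d : ℕ} (g : E d ≃ᵢ E d) (X : Set (E d)) :
    g.symm '' (g '' X) = X := by
  rw [← Set.image_comp]; simp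

lemma flagEquiv_refl {d : ℕ} {P : Set (E d)} (Φ : PolyFlag d P) : FlagEquiv d P Φ Φ := by
  refine ⟨IsometryEquiv.refl (E d), isSymmetry_refl d P, ?_⟩
  unfold flagImage
  have : (fun F : Set (E d) => ⇑(IsometryEquiv.refl (E d)) '' F) = fun F => F := by
    funext F; exact Set.image_id F
  rw [this, Set.image_id']

lemma flagEquiv_symm {d : ℕ} {P : Set (E d)} {Φ Ψ : PolyFlag d P}
    (h : FlagEquiv d P Φ Ψ) : FlagEquiv d P Ψ Φ := by
  obtain ⟨g, hg, him⟩ := h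
  refine ⟨g.symm, isSymmetry_symm hg, ?_⟩
  unfold flagImage at *
  rw [← him, Set.image_image]
  simp only [image_symm_image, Set.image_id']

lemma flagEquiv_trans {d : ℕ} {P : Set (E d)} {Φ Ψ Ω : PolyFlag d P}
    (h₁ : FlagEquiv d P Φ Ψ) (h₂ : FlagEquiv d P Ψ Ω) : FlagEquiv d P Φ Ω := by
  obtain ⟨g₁, hg₁, him₁⟩ := h₁
  obtain ⟨g₂, hg₂, him₂⟩ := h₂
  refine ⟨g₁.trans g₂, isSymmetry_trans hg₁ hg₂, ?_⟩
  unfold flagImage at *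
  rw [← him₂, ← him₁]
  conv_rhs => rw [Set.image_image]
  exact Set.image_congr fun x _ => by
    rw [show ⇑(g₁.trans g₂) = ⇑g₂ ∘ ⇑g₁ from rfl, Set.image_comp]

/-- Any chain extends to a flag. -/
lemma exists_flag_superset {α : Type*} [PartialOrder α] {c : Set α}
    (hc : IsChain (· ≤ ·) c) : ∃ Φ : Flag α, c ⊆ ↑Φ := by
  obtain ⟨M, hM, hsub⟩ := hc.exists_maxChain
  exact ⟨Flag.ofIsMaxChain M hM, hsub⟩

/-- Key combinatorial lemma: if two flags of a two-orbit `j`-intransitive polytope share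
their rank-`j` elements, they are equivalent. -/
lemma main_equiv {d : ℕ} {P : Set (E d)} {j : ℤ} (hPj : IsJIntransitive d P j)
    (Ω Ω' : PolyFlag d P)
    (hshare : ∀ x : Faces d P, rk x.1 = j → ((x ∈ Ω → x ∈ Ω') ∧ (x ∈ Ω' → x ∈ Ω))) :
    FlagEquiv d P Ω Ω' := by
  by_contra hno
  obtain ⟨Φ₀, Ψ₀, hne₀, hcov⟩ := hPj.1
  have htrans := hPj.2.1
  have hcov' : ∀ Λ : PolyFlag d P, FlagEquiv d P Λ Ω ∨ FlagEquiv d P Λ Ω' := by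
    rcases hcov Ω with h1 | h1 <;> rcases hcov Ω' with h2 | h2
    · exact absurd (flagEquiv_trans h1 (flagEquiv_symm h2)) hno
    · intro Λ
      rcases hcov Λ with h | h
      · exact Or.inl (flagEquiv_trans h (flagEquiv_symm h1))
      · exact Or.inr (flagEquiv_trans h (flagEquiv_symm h2))
    · intro Λ
      rcases hcov Λ with h | h
      · exact Or.inr (flagEquiv_trans h (flagEquiv_symm h2))
      · exact Or.inl (flagEquiv_trans h (flagEquiv_symm h1))
    · exact absurd (flagEquiv_trans h1 (flagEquiv_symm h2)) hno
  apply htrans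
  intro A B hA hB
  rcases lt_or_ge j 0 with hj | hj
  · -- ranks below zero: both faces are empty
    have hAe : A = ∅ := by
      rcases hA.2 with ⟨_, h⟩ | ⟨hne', hj'⟩
      · exact h
      · exfalso; have : (0:ℤ) ≤ j := hj' ▸ Int.natCast_nonneg _; omega
    have hBe : B = ∅ := by
      rcases hB.2 with ⟨_, h⟩ | ⟨hne', hj'⟩
      · exact h
      · exfalso; have : (0:ℤ) ≤ j := hj' ▸ Int.natCast_nonneg _; omega
    exact ⟨IsometryEquiv.refl (E d), isSymmetry_refl d P, by simp [hAe, hBe]⟩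
  · have hmap : ∀ C : Set (E d), IsFaceOfRank d P C j →
        ∃ (g : E d ≃ᵢ E d) (y : Faces d P), IsSymmetry d P g ∧ g '' C = y.1 ∧
          rk y.1 = j ∧ y ∈ Ω ∧ y ∈ Ω' := by
      intro C hC
      set c : Faces d P := ⟨C, hC.1⟩ with hcdef
      have hchain : IsChain (· ≤ ·) ({c} : Set (Faces d P)) :=
        Set.Subsingleton.isChain Set.subsingleton_singleton
      obtain ⟨Λ, hΛ⟩ := exists_flag_superset hchain
      have hcΛ : c ∈ Λ := hΛ rfl
      have hval : ∀ (Θ : PolyFlag d P), FlagEquiv d P Λ Θ →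
          ∃ (g : E d ≃ᵢ E d) (y : Faces d P), IsSymmetry d P g ∧ g '' C = y.1 ∧
            rk y.1 = j ∧ y ∈ Θ := by
        intro Θ hΘ
        obtain ⟨g, hg, him⟩ := hΘ
        have hmem : g '' C ∈ Subtype.val '' (Θ : Set (Faces d P)) := by
          rw [← him]
          exact ⟨C, ⟨c, hcΛ, rfl⟩, rfl⟩
        obtain ⟨y, hyΘ, hy⟩ := hmem
        have hyrk : rk y.1 = j := by
          rw [hy, rk_image, hC.rk_eq]
        exact ⟨g, y, hg, hy.symm, hyrk, hyΘ⟩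
      rcases hcov' Λ with h | h
      · obtain ⟨g, y, hg, hgy, hyrk, hyΩ⟩ := hval Ω h
        exact ⟨g, y, hg, hgy, hyrk, hyΩ, (hshare y hyrk).1 hyΩ⟩
      · obtain ⟨g, y, hg, hgy, hyrk, hyΩ'⟩ := hval Ω' h
        exact ⟨g, y, hg, hgy, hyrk, (hshare y hyrk).2 hyΩ', hyΩ'⟩
    obtain ⟨g₁, y₁, hg₁, hgy₁, hrk₁, hy₁Ω, _⟩ := hmap A hA
    obtain ⟨g₂, y₂, hg₂, hgy₂, hrk₂, hy₂Ω, _⟩ := hmap B hB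
    have hy12 : y₁ = y₂ := by
      apply Subtype.ext
      rcases Ω.le_or_le hy₁Ω hy₂Ω with h | h
      · exact eq_of_subset_of_rk_eq y₁.2 y₂.2 h (hrk₁.trans hrk₂.symm)
      · exact (eq_of_subset_of_rk_eq y₂.2 y₁.2 h (hrk₂.trans hrk₁.symm)).symm
    refine ⟨g₁.trans g₂.symm, isSymmetry_trans hg₁ (isSymmetry_symm hg₂), ?_⟩
    have : ⇑(g₁.trans g₂.symm) = ⇑g₂.symm ∘ ⇑g₁ := rfl
    rw [this, Set.image_comp, hgy₁, hy12, ← hgy₂, image_symm_image]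

section Extend

variable {d : ℕ} {P F G : Set (E d)}

/-- The inclusion of section faces into faces. -/
def secInc (d : ℕ) (P F G : Set (E d)) (H : SectionFaces d P F G) : Faces d P :=
  ⟨H.1, H.2.1⟩

lemma secInc_le_iff {H₁ H₂ : SectionFaces d P F G} :
    secInc d P F G H₁ ≤ secInc d P F G H₂ ↔ H₁ ≤ H₂ := Iff.rfl

/-- Extend a section flag to a flag of `P`, reusing a fixed maximal chain `M`
outside of the open interval `(F, G)`. -/
lemma extend_flag (hFe : IsExposed ℝ P F) (hGe : IsExposed ℝ P G) (hFG : F ⊆ G)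
    (M : Set (Faces d P)) (hM : IsMaxChain (· ≤ ·) M)
    (hFM : (⟨F, hFe⟩ : Faces d P) ∈ M) (hGM : (⟨G, hGe⟩ : Faces d P) ∈ M)
    (Θ : SectionFlag d P F G) :
    ∃ Θ' : PolyFlag d P, (Θ' : Set (Faces d P)) =
      (M \ {x | (⟨F, hFe⟩ : Faces d P) < x ∧ x < (⟨G, hGe⟩ : Faces d P)}) ∪
        (secInc d P F G '' (Θ : Set (SectionFaces d P F G))) := by
  set fF : Faces d P := ⟨F, hFe⟩ with hfF
  set fG : Faces d P := ⟨G, hGe⟩ with hfG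
  set interior : Set (Faces d P) := {x | fF < x ∧ x < fG} with hint
  set carrier : Set (Faces d P) :=
    (M \ interior) ∪ (secInc d P F G '' (Θ : Set (SectionFaces d P F G))) with hcar
  have hfFle : ∀ b : SectionFaces d P F G, fF ≤ secInc d P F G b := fun b => b.2.2.1
  have hlefG : ∀ b : SectionFaces d P F G, secInc d P F G b ≤ fG := fun b => b.2.2.2
  have hfFmem : fF ∈ M \ interior := ⟨hFM, fun h => lt_irrefl _ h.1⟩
  have hfGmem : fG ∈ M \ interior := ⟨hGM, fun h => lt_irrefl _ h.2⟩
  -- comparability of chain elements with section elements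
  have hcmp : ∀ x ∈ M \ interior, ∀ b : SectionFaces d P F G,
      x ≤ secInc d P F G b ∨ secInc d P F G b ≤ x := by
    intro x hx b
    rcases hM.1.total hx.1 hFM with h | h
    · exact Or.inl (le_trans h (hfFle b))
    · rcases hM.1.total hx.1 hGM with h' | h'
      · by_cases hF' : fF < x
        · by_cases hG' : x < fG
          · exact absurd ⟨hF', hG'⟩ hx.2
          · have hx' : x = fG := h'.lt_or_eq.resolve_left hG'
            exact Or.inr (hx' ▸ hlefG b)
        · have hx' : fF = x := h.lt_or_eq.resolve_left hF'
          exact Or.inl (hx' ▸ hfFle b)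
      · exact Or.inr (le_trans (hlefG b) h')
  -- the extension is a chain
  have hchain : IsChain (· ≤ ·) carrier := by
    intro x hx y hy hxy
    rcases hx with hx | hx <;> rcases hy with hy | hy
    · exact hM.1 hx.1 hy.1 hxy
    · obtain ⟨b, hb, rfl⟩ := hy
      exact hcmp x hx b
    · obtain ⟨a, ha, rfl⟩ := hx
      exact (hcmp y hy a).elim (fun h => Or.inr h) (fun h => Or.inl h)
    · obtain ⟨a, ha, rfl⟩ := hx
      obtain ⟨b, hb, rfl⟩ := hy
      have hab : a ≠ b := fun h => hxy (by rw [h])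
      exact (Θ.chain_le hb ha (Ne.symm hab)).elim (fun h => Or.inr h) (fun h => Or.inl h)
  -- maximality
  have hmax : ∀ ⦃s : Set (Faces d P)⦄, IsChain (· ≤ ·) s → carrier ⊆ s → carrier = s := by
    intro s hs hsub
    refine Set.Subset.antisymm hsub fun z hz => ?_
    have hcomp : ∀ w ∈ carrier, z ≤ w ∨ w ≤ z := fun w hw => hs.total hz (hsub hw)
    have hzinM : (z ≤ fF ∨ fG ≤ z) → z ∈ M := by
      intro hcase
      have hzM : ∀ m ∈ M, z ≤ m ∨ m ≤ z := by
        intro m hm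
        by_cases hmi : m ∈ interior
        · rcases hcase with h | h
          · exact Or.inl (le_trans h (le_of_lt hmi.1))
          · exact Or.inr (le_trans (le_of_lt hmi.2) h)
        · exact hcomp m (Or.inl ⟨hm, hmi⟩)
      have : M = insert z M := hM.2 (hM.1.insert fun m hm _ => hzM m hm)
        (Set.subset_insert _ _)
      rw [this]; exact Set.mem_insert _ _
    rcases hcomp fF (Or.inl hfFmem) with hzF | hzF
    · -- z ≤ fF
      have hzM := hzinM (Or.inl hzF)
      exact Or.inl ⟨hzM, fun h => absurd (lt_of_lt_of_le h.1 hzF) (lt_irrefl _)⟩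
    · rcases hcomp fG (Or.inl hfGmem) with hzG | hzG
      · -- fF ≤ z ≤ fG : z is a section face
        have hzF' : F ⊆ z.1 := hzF
        have hzG' : z.1 ⊆ G := hzG
        set zS : SectionFaces d P F G := ⟨z.1, z.2, hzF', hzG'⟩ with hzS
        have hzΘ : zS ∈ Θ := by
          rw [Flag.mem_iff_forall_le_or_ge]
          intro b hb
          have := hcomp (secInc d P F G b) (Or.inr ⟨b, hb, rfl⟩)
          exact this.imp (fun h => h) (fun h => h)
        exact Or.inr ⟨zS, hzΘ, rfl⟩
      · -- fG ≤ z
        have hzM := hzinM (Or.inr hzG)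
        exact Or.inl ⟨hzM, fun h => absurd (lt_of_le_of_lt hzG h.2) (lt_irrefl _)⟩
  exact ⟨⟨carrier, hchain, hmax⟩, rfl⟩

end Extend

lemma transitiveOnRank_of_neg {d : ℕ} {P : Set (E d)} {i : ℤ} (hi : i < 0) :
    TransitiveOnRank d P i := by
  intro A B hA hB
  have hAe : A = ∅ := by
    rcases hA.2 with ⟨_, h⟩ | ⟨hne', hj'⟩
    · exact h
    · exfalso; have : (0:ℤ) ≤ i := hj' ▸ Int.natCast_nonneg _; omega
  have hBe : B = ∅ := by
    rcases hB.2 with ⟨_, h⟩ | ⟨hne', hj'⟩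
    · exact h
    · exfalso; have : (0:ℤ) ≤ i := hj' ▸ Int.natCast_nonneg _; omega
  exact ⟨IsometryEquiv.refl (E d), isSymmetry_refl d P, by simp [hAe, hBe]⟩


/-- The main construction: two section flags are related by a symmetry of `P`
fixing `F` and `G`. -/
lemma part1 {d : ℕ} {P : Set (E d)} {j : ℤ} (hPj : IsJIntransitive d P j)
    {k l : ℤ} {F G : Set (E d)} (hF : IsFaceOfRank d P F l) (hG : IsFaceOfRank d P G k)
    (hFG : F ⊆ G) (hjkl : j ≤ l ∨ k ≤ j) (Φ Ψ : SectionFlag d P F G) :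
    ∃ g : E d ≃ᵢ E d, IsSymmetry d P g ∧ g '' F = F ∧ g '' G = G ∧
      (fun H : Set (E d) => g '' H) ''
          (Subtype.val '' (Φ : Set (SectionFaces d P F G))) =
        Subtype.val '' (Ψ : Set (SectionFaces d P F G)) := by
  have hj0 : 0 ≤ j := by
    by_contra h
    exact hPj.2.1 (transitiveOnRank_of_neg (by omega))
  set fF : Faces d P := ⟨F, hF.1⟩ with hfF
  set fG : Faces d P := ⟨G, hG.1⟩ with hfG
  set sF : SectionFaces d P F G := ⟨F, hF.1, subset_rfl, hFG⟩ with hsF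
  set sG : SectionFaces d P F G := ⟨G, hG.1, hFG, subset_rfl⟩ with hsG
  -- every section flag contains `F` and `G`
  have hbot : ∀ Θ : SectionFlag d P F G, sF ∈ Θ := fun Θ =>
    Flag.mem_iff_forall_le_or_ge.2 fun b _ => Or.inl b.2.2.1
  have htop : ∀ Θ : SectionFlag d P F G, sG ∈ Θ := fun Θ =>
    Flag.mem_iff_forall_le_or_ge.2 fun b _ => Or.inr b.2.2.2
  -- a fixed maximal chain through `F` and `G`
  have hchainFG : IsChain (· ≤ ·) ({fF, fG} : Set (Faces d P)) := by
    intro x hx y hy hxy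
    rcases hx with rfl | hx <;> rcases hy with rfl | hy
    · exact absurd rfl hxy
    · rw [Set.mem_singleton_iff] at hy; subst hy; exact Or.inl hFG
    · rw [Set.mem_singleton_iff] at hx; subst hx; exact Or.inr hFG
    · rw [Set.mem_singleton_iff] at hx hy; subst hx; subst hy; exact absurd rfl hxy
  obtain ⟨M, hM, hMsub⟩ := hchainFG.exists_maxChain
  have hFM : fF ∈ M := hMsub (Set.mem_insert _ _)
  have hGM : fG ∈ M := hMsub (Set.mem_insert_of_mem _ rfl)
  obtain ⟨Φ', hΦ'⟩ := extend_flag hF.1 hG.1 hFG M hM hFM hGM Φ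
  obtain ⟨Ψ', hΨ'⟩ := extend_flag hF.1 hG.1 hFG M hM hFM hGM Ψ
  set interior : Set (Faces d P) := {x | fF < x ∧ x < fG} with hint
  have hfFmem : fF ∈ M \ interior := ⟨hFM, fun h => lt_irrefl _ h.1⟩
  have hfGmem : fG ∈ M \ interior := ⟨hGM, fun h => lt_irrefl _ h.2⟩
  -- rank-j elements inside a section flag must be F or G
  have hrkj : ∀ (Θ : SectionFlag d P F G) (b : SectionFaces d P F G), b ∈ Θ →
      rk b.1 = j → secInc d P F G b = fF ∨ secInc d P F G b = fG := by
    intro Θ b _ hrk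
    rcases hjkl with hjl | hkj
    · left
      have h1 : l ≤ rk b.1 := hF.rk_eq ▸ rk_mono b.2.2.1
      have h2 : F = b.1 := eq_of_subset_of_rk_eq hF.1 b.2.1 b.2.2.1
        (by rw [hF.rk_eq, hrk]; omega)
      exact Subtype.ext h2.symm
    · right
      have h1 : rk b.1 ≤ k := hG.rk_eq ▸ rk_mono b.2.2.2
      have h2 : b.1 = G := eq_of_subset_of_rk_eq b.2.1 hG.1 b.2.2.2
        (by rw [hG.rk_eq, hrk]; omega)
      exact Subtype.ext h2
  -- shared rank-j faces
  have hshare : ∀ x : Faces d P, rk x.1 = j → ((x ∈ Φ' → x ∈ Ψ') ∧ (x ∈ Ψ' → x ∈ Φ')) := by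
    have key : ∀ (Θ : SectionFlag d P F G) (Θ' : PolyFlag d P),
        (Θ' : Set (Faces d P)) = (M \ interior) ∪ (secInc d P F G '' (Θ : Set _)) →
        ∀ x : Faces d P, rk x.1 = j → x ∈ Θ' → x ∈ M \ interior := by
      intro Θ Θ' hΘ' x hrk hx
      have hx' : x ∈ (M \ interior) ∪ (secInc d P F G '' (Θ : Set _)) := hΘ' ▸ hx
      rcases hx' with hx' | hx'
      · exact hx'
      · obtain ⟨b, hb, rfl⟩ := hx'
        rcases hrkj Θ b hb hrk with h | h
        · rw [h]; exact hfFmem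
        · rw [h]; exact hfGmem
    intro x hrk
    constructor
    · intro hx
      have := key Φ Φ' hΦ' x hrk hx
      have : x ∈ (M \ interior) ∪ (secInc d P F G '' (Ψ : Set _)) := Or.inl this
      show x ∈ (Ψ' : Set (Faces d P)); rw [hΨ']; exact this
    · intro hx
      have := key Ψ Ψ' hΨ' x hrk hx
      have : x ∈ (M \ interior) ∪ (secInc d P F G '' (Φ : Set _)) := Or.inl this
      show x ∈ (Φ' : Set (Faces d P)); rw [hΦ']; exact this
  obtain ⟨g, hg, him⟩ := main_equiv hPj Φ' Ψ' hshare
  unfold flagImage at him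
  -- g fixes F and G
  have hmemval : ∀ (Θ : SectionFlag d P F G) (Θ' : PolyFlag d P),
      (Θ' : Set (Faces d P)) = (M \ interior) ∪ (secInc d P F G '' (Θ : Set _)) →
      ∀ x : Faces d P, x ∈ M \ interior → x.1 ∈ Subtype.val '' (Θ' : Set (Faces d P)) := by
    intro Θ Θ' hΘ' x hx
    exact ⟨x, by rw [hΘ']; exact Or.inl hx, rfl⟩
  have hfix : ∀ C : Set (E d), (∀ hC : IsExposed ℝ P C, (⟨C, hC⟩ : Faces d P) ∈ M \ interior) →
      IsExposed ℝ P C → g '' C = C := by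
    intro C hCmem hC
    have h1 : C ∈ Subtype.val '' (Φ' : Set (Faces d P)) := hmemval Φ Φ' hΦ' ⟨C, hC⟩ (hCmem hC)
    have h2 : g '' C ∈ Subtype.val '' (Ψ' : Set (Faces d P)) := by
      rw [← him]; exact ⟨C, h1, rfl⟩
    have h3 : C ∈ Subtype.val '' (Ψ' : Set (Faces d P)) := hmemval Ψ Ψ' hΨ' ⟨C, hC⟩ (hCmem hC)
    obtain ⟨y, hy, hyv⟩ := h2
    obtain ⟨z, hz, hzv⟩ := h3
    have hrkeq : rk y.1 = rk z.1 := by rw [hyv, hzv, rk_image]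
    have : y.1 = z.1 := by
      rcases Ψ'.le_or_le hy hz with h | h
      · exact eq_of_subset_of_rk_eq y.2 z.2 h hrkeq
      · exact (eq_of_subset_of_rk_eq z.2 y.2 h hrkeq.symm).symm
    rw [← hyv, this, hzv]
  have hgF : g '' F = F := hfix F (fun hC => hfFmem) hF.1
  have hgG : g '' G = G := hfix G (fun hC => hfGmem) hG.1
  have hgF' : g.symm '' F = F := by conv_lhs => rw [← hgF, image_symm_image]
  have hgG' : g.symm '' G = G := by conv_lhs => rw [← hgG, image_symm_image]
  refine ⟨g, hg, hgF, hgG, ?_⟩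
  -- an element of an extended flag lying between F and G comes from the section flag
  have hsec : ∀ (Θ : SectionFlag d P F G) (Θ' : PolyFlag d P),
      (Θ' : Set (Faces d P)) = (M \ interior) ∪ (secInc d P F G '' (Θ : Set _)) →
      ∀ y : Faces d P, y ∈ Θ' → F ⊆ y.1 → y.1 ⊆ G →
        y.1 ∈ Subtype.val '' (Θ : Set (SectionFaces d P F G)) := by
    intro Θ Θ' hΘ' y hy hFy hyG
    have hy' : y ∈ (M \ interior) ∪ (secInc d P F G '' (Θ : Set _)) := hΘ' ▸ hy
    rcases hy' with hy' | hy'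
    · -- y is in M outside the interior, but between F and G: so y = fF or y = fG
      have h1 : fF ≤ y := hFy
      have h2 : y ≤ fG := hyG
      rcases h1.lt_or_eq with h1' | h1'
      · rcases h2.lt_or_eq with h2' | h2'
        · exact absurd ⟨h1', h2'⟩ hy'.2
        · exact ⟨sG, htop Θ, by rw [h2']⟩
      · exact ⟨sF, hbot Θ, by rw [← h1']⟩
    · obtain ⟨b, hb, rfl⟩ := hy'
      exact ⟨b, hb, rfl⟩
  have hvalsub : ∀ (Θ : SectionFlag d P F G) (Θ' : PolyFlag d P),
      (Θ' : Set (Faces d P)) = (M \ interior) ∪ (secInc d P F G '' (Θ : Set _)) →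
      Subtype.val '' (Θ : Set (SectionFaces d P F G)) ⊆
        Subtype.val '' (Θ' : Set (Faces d P)) := by
    rintro Θ Θ' hΘ' x ⟨b, hb, rfl⟩
    exact ⟨secInc d P F G b, by rw [hΘ']; exact Or.inr ⟨b, hb, rfl⟩, rfl⟩
  apply Set.Subset.antisymm
  · rintro w ⟨x, hx, rfl⟩
    have hx' : x ∈ Subtype.val '' (Φ' : Set (Faces d P)) := hvalsub Φ Φ' hΦ' hx
    have hgx : g '' x ∈ Subtype.val '' (Ψ' : Set (Faces d P)) := by
      rw [← him]; exact ⟨x, hx', rfl⟩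
    obtain ⟨y, hy, hyv⟩ := hgx
    obtain ⟨b, hbΦ, rfl⟩ := hx
    have hFy : F ⊆ y.1 := by
      have h' : g '' F ⊆ g '' b.1 := Set.image_mono b.2.2.1
      rw [hgF] at h'; rw [← hyv] at h'; exact h'
    have hyG : y.1 ⊆ G := by
      have h' : g '' b.1 ⊆ g '' G := Set.image_mono b.2.2.2
      rw [hgG] at h'; rw [← hyv] at h'; exact h' 
    have := hsec Ψ Ψ' hΨ' y hy hFy hyG
    rwa [hyv] at this
  · rintro w ⟨c, hc, rfl⟩
    have hc' : (c.1 : Set (E d)) ∈ Subtype.val '' (Ψ' : Set (Faces d P)) :=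
      hvalsub Ψ Ψ' hΨ' ⟨c, hc, rfl⟩
    rw [← him] at hc'
    obtain ⟨x, hx, hxv⟩ := hc'
    obtain ⟨y, hy, rfl⟩ := hx
    have hxc : g '' y.1 = c.1 := hxv
    have hyx : y.1 = g.symm '' c.1 := by rw [← hxc, image_symm_image]
    have hFy : F ⊆ y.1 := by
      have h' : g.symm '' F ⊆ g.symm '' c.1 := Set.image_mono c.2.2.1
      rw [hgF'] at h'; rw [← hyx] at h'; exact h'
    have hyG : y.1 ⊆ G := by
      have h' : g.symm '' c.1 ⊆ g.symm '' G := Set.image_mono c.2.2.2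
      rw [hgG'] at h'; rw [← hyx] at h'; exact h' 
    have hmem := hsec Φ Φ' hΦ' y hy hFy hyG
    exact ⟨y.1, hmem, hxc⟩

lemma le_sup'_of_mem_hull {d : ℕ} {S : Finset (E d)} (hS : S.Nonempty)
    (l : E d →L[ℝ] ℝ) {x : E d} (hx : x ∈ convexHull ℝ (S : Set (E d))) :
    l x ≤ S.sup' hS l := by
  have : convexHull ℝ (S : Set (E d)) ⊆ {y | l y ≤ S.sup' hS l} := by
    apply convexHull_min
    · intro s hs
      exact Finset.le_sup' l hs
    · exact convex_halfSpace_le ⟨l.map_add, fun c y => l.map_smul c y⟩ _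
  exact this hx

lemma hull_subset_lev {d : ℕ} {S : Finset (E d)} {l : E d →L[ℝ] ℝ} {c : ℝ}
    (h : ∀ s ∈ S, l s = c) {x : E d} (hx : x ∈ convexHull ℝ (S : Set (E d))) :
    l x = c := by
  have h1 : convexHull ℝ (S : Set (E d)) ⊆ {y | l y ≤ c} := by
    apply convexHull_min (fun s hs => le_of_eq (h s hs))
    exact convex_halfSpace_le ⟨l.map_add, fun c y => l.map_smul c y⟩ _
  have h2 : convexHull ℝ (S : Set (E d)) ⊆ {y | c ≤ l y} := by
    apply convexHull_min (fun s hs => ge_of_eq (h s hs))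
    exact convex_halfSpace_ge ⟨l.map_add, fun c y => l.map_smul c y⟩ _
  exact le_antisymm (h1 hx) (h2 hx)

lemma mem_hull_filter_of_max {d : ℕ} {S : Finset (E d)} {l : E d →L[ℝ] ℝ} {c : ℝ}
    (hc : ∀ s ∈ S, l s ≤ c) {x : E d}
    (hx : x ∈ convexHull ℝ (S : Set (E d))) (hlx : l x = c) :
    x ∈ convexHull ℝ ((S.filter (fun s => l s = c) : Finset (E d)) : Set (E d)) := by
  rw [Finset.convexHull_eq] at hx
  obtain ⟨w, hw0, hw1, hwx⟩ := hx
  have hxsum : x = ∑ y ∈ S, w y • y := by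
    rw [← hwx, Finset.centerMass_eq_of_sum_1 S id hw1]; rfl
  have hlsum : ∑ y ∈ S, w y * l y = c := by
    have : l x = ∑ y ∈ S, w y * l y := by
      rw [hxsum, map_sum]
      exact Finset.sum_congr rfl fun y _ => by rw [map_smul, smul_eq_mul]
    rw [← this, hlx]
  have hzero : ∀ y ∈ S, w y * (c - l y) = 0 := by
    have hsum0 : ∑ y ∈ S, w y * (c - l y) = 0 := by
      have : ∑ y ∈ S, w y * (c - l y) = (∑ y ∈ S, w y * c) - ∑ y ∈ S, w y * l y := by
        rw [← Finset.sum_sub_distrib]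
        exact Finset.sum_congr rfl fun y _ => by ring
      rw [this, hlsum, ← Finset.sum_mul, hw1, one_mul, sub_self]
    exact (Finset.sum_eq_zero_iff_of_nonneg fun y hy =>
      mul_nonneg (hw0 y hy) (sub_nonneg.2 (hc y hy))).1 hsum0
  have hwzero : ∀ y ∈ S, y ∉ S.filter (fun s => l s = c) → w y = 0 := by
    intro y hy hyf
    have hne : l y ≠ c := by
      intro h; exact hyf (Finset.mem_filter.2 ⟨hy, h⟩)
    have := hzero y hy
    rcases mul_eq_zero.1 this with h | h
    · exact h
    · exact absurd (by linarith [sub_eq_zero.1 h] : l y = c) hne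
  rw [Finset.convexHull_eq]
  have hfs : S.filter (fun s => l s = c) ⊆ S := Finset.filter_subset _ _
  have hsum1 : ∑ y ∈ S.filter (fun s => l s = c), w y = 1 := by
    rw [← hw1]
    exact Finset.sum_subset hfs hwzero
  refine ⟨w, fun y hy => hw0 y (hfs hy), hsum1, ?_⟩
  rw [Finset.centerMass_eq_of_sum_1 _ id hsum1, hxsum]
  exact Finset.sum_subset hfs fun y hy hyf => by
    rw [hwzero y hy hyf, zero_smul]

/-- The set of maximizers of a linear functional over a polytope is the hull of the
maximizing vertices. -/
lemma argmax_hull {d : ℕ} {S : Finset (E d)} (hS : S.Nonempty) (l : E d →L[ℝ] ℝ) :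
    {x ∈ convexHull ℝ (S : Set (E d)) |
        ∀ y ∈ convexHull ℝ (S : Set (E d)), l y ≤ l x} =
      convexHull ℝ ((S.filter (fun s => l s = S.sup' hS l) : Finset (E d)) : Set (E d)) := by
  set c := S.sup' hS l with hc
  obtain ⟨s₀, hs₀S, hs₀⟩ := Finset.exists_mem_eq_sup' hS l
  have hs₀hull : s₀ ∈ convexHull ℝ (S : Set (E d)) := subset_convexHull ℝ _ hs₀S
  ext x
  constructor
  · rintro ⟨hx, hmax⟩
    have hlx : l x = c := le_antisymm (le_sup'_of_mem_hull hS l hx)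
      (by rw [hc, hs₀]; exact hmax s₀ hs₀hull)
    exact mem_hull_filter_of_max (fun s hs => Finset.le_sup' l hs) hx hlx
  · intro hx
    have hfS : (↑(S.filter (fun s => l s = c)) : Set (E d)) ⊆ (S : Set (E d)) := by
      intro y hy; exact Finset.mem_coe.2 (Finset.filter_subset _ _ (Finset.mem_coe.1 hy))
    have hxP : x ∈ convexHull ℝ (S : Set (E d)) := convexHull_mono hfS hx
    have hlx : l x = c :=
      hull_subset_lev (fun s hs => (Finset.mem_filter.1 hs).2) hx
    exact ⟨hxP, fun y hy => hlx ▸ le_sup'_of_mem_hull hS l hy⟩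

/-- An exposed face of an exposed face of a polytope is an exposed face of the polytope. -/
lemma isExposed_trans_of_hull {d : ℕ} {S : Finset (E d)} {A B : Set (E d)}
    (hA : IsExposed ℝ (convexHull ℝ (S : Set (E d))) A) (hB : IsExposed ℝ A B) :
    IsExposed ℝ (convexHull ℝ (S : Set (E d))) B := by
  intro hBne
  have hBA : B ⊆ A := hB.subset
  have hAne : A.Nonempty := hBne.mono hBA
  obtain ⟨l₁, hl₁⟩ := hA hAne
  have hS : S.Nonempty := by
    have h1 : (convexHull ℝ (S : Set (E d))).Nonempty :=
      hAne.mono (hl₁ ▸ Set.sep_subset _ _)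
    exact Finset.coe_nonempty.1 (convexHull_nonempty_iff.1 h1)
  set c₁ := S.sup' hS l₁ with hc₁
  set S₁ := S.filter (fun s => l₁ s = c₁) with hS₁def
  have hAS₁ : A = convexHull ℝ (S₁ : Set (E d)) := by rw [hl₁]; exact argmax_hull hS l₁
  have hS₁ : S₁.Nonempty :=
    Finset.coe_nonempty.1 (convexHull_nonempty_iff.1 (hAS₁ ▸ hAne))
  obtain ⟨l₂, hl₂⟩ := hB hBne
  set c₂ := S₁.sup' hS₁ l₂ with hc₂
  set S₂ := S₁.filter (fun s => l₂ s = c₂) with hS₂def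
  have hBS₂ : B = convexHull ℝ (S₂ : Set (E d)) := by
    rw [hl₂, hAS₁]; exact argmax_hull hS₁ l₂
  have hS₂ : S₂.Nonempty :=
    Finset.coe_nonempty.1 (convexHull_nonempty_iff.1 (hBS₂ ▸ hBne))
  -- choose ε
  set T := S.filter (fun s => ¬ l₁ s = c₁ ∧ c₂ < l₂ s) with hTdef
  classical
  set e : ℝ := if hT : T.Nonempty then
      min 1 (T.inf' hT (fun s => (c₁ - l₁ s) / (l₂ s - c₂))) else 1 with hedef
  have hratio : ∀ s ∈ T, 0 < (c₁ - l₁ s) / (l₂ s - c₂) := by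
    intro s hs
    obtain ⟨hsS, hne, hlt⟩ := Finset.mem_filter.1 hs
    have h1 : l₁ s ≤ c₁ := Finset.le_sup' l₁ hsS
    exact div_pos (by cases lt_or_eq_of_le h1 with
      | inl h => linarith
      | inr h => exact absurd h hne) (by linarith)
  have he : 0 < e := by
    rw [hedef]
    split_ifs with hT
    · exact lt_min one_pos ((Finset.lt_inf'_iff hT).2 hratio)
    · exact one_pos
  have heT : ∀ s ∈ T, e ≤ (c₁ - l₁ s) / (l₂ s - c₂) := by
    intro s hs
    rw [hedef, dif_pos ⟨s, hs⟩]
    exact le_trans (min_le_right _ _) (Finset.inf'_le _ hs)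
  set ε := e / 2 with hεdef
  have hε : 0 < ε := by positivity
  -- the combined functional
  set l : E d →L[ℝ] ℝ := l₁ + ε • l₂ with hldef
  have hlapp : ∀ x : E d, l x = l₁ x + ε * l₂ x := fun x => by
    simp [hldef, smul_eq_mul]
  set c := c₁ + ε * c₂ with hcdef
  have k1 : ∀ s ∈ S, s ∉ S₂ → l s < c := by
    intro s hsS hs₂
    rw [hlapp, hcdef]
    by_cases hs₁ : s ∈ S₁
    · have h1 : l₁ s = c₁ := (Finset.mem_filter.1 hs₁).2
      have h2 : l₂ s ≤ c₂ := Finset.le_sup' l₂ hs₁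
      have h3 : l₂ s ≠ c₂ := fun h => hs₂ (Finset.mem_filter.2 ⟨hs₁, h⟩)
      have : l₂ s < c₂ := lt_of_le_of_ne h2 h3
      nlinarith
    · have h1 : l₁ s ≤ c₁ := Finset.le_sup' l₁ hsS
      have h2 : l₁ s ≠ c₁ := fun h => hs₁ (Finset.mem_filter.2 ⟨hsS, h⟩)
      have h1' : l₁ s < c₁ := lt_of_le_of_ne h1 h2
      by_cases h3 : l₂ s ≤ c₂
      · nlinarith
      · push_neg at h3
        have hsT : s ∈ T := Finset.mem_filter.2 ⟨hsS, h2, h3⟩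
        have := heT s hsT
        have hεlt : ε < (c₁ - l₁ s) / (l₂ s - c₂) := by
          rw [hεdef]; linarith
        have := (lt_div_iff₀ (by linarith : (0:ℝ) < l₂ s - c₂)).1 hεlt
        nlinarith
  have k2 : ∀ s ∈ S₂, l s = c := by
    intro s hs
    obtain ⟨hs₁, h2⟩ := Finset.mem_filter.1 hs
    have h1 : l₁ s = c₁ := (Finset.mem_filter.1 hs₁).2
    rw [hlapp, hcdef, h1, h2]
  have hS₂S : S₂ ⊆ S := fun s hs =>
    Finset.filter_subset _ _ ((Finset.filter_subset _ _) hs)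
  have hsup : S.sup' hS l = c := by
    apply le_antisymm
    · apply Finset.sup'_le
      intro s hsS
      by_cases hs₂ : s ∈ S₂
      · exact le_of_eq (k2 s hs₂)
      · exact le_of_lt (k1 s hsS hs₂)
    · obtain ⟨s₂, hs₂⟩ := hS₂
      exact (k2 s₂ hs₂) ▸ Finset.le_sup' l (hS₂S hs₂)
  have hfilter : S.filter (fun s => l s = S.sup' hS l) = S₂ := by
    ext s
    simp only [Finset.mem_filter, hsup]
    constructor
    · rintro ⟨hsS, hsc⟩
      by_contra hs₂
      exact absurd hsc (ne_of_lt (k1 s hsS hs₂))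
    · intro hs
      exact ⟨hS₂S hs, k2 s hs⟩
  refine ⟨l, ?_⟩
  rw [argmax_hull hS l, hfilter, ← hBS₂]

/-- For a polytope, the faces of an exposed face `A` are exactly the faces of `P`
contained in `A`. -/
lemma faces_of_face {d : ℕ} {P A : Set (E d)} (hP : IsConvexPolytope d P)
    (hA : IsExposed ℝ P A) (H : Set (E d)) :
    IsExposed ℝ A H ↔ (IsExposed ℝ P H ∧ ∅ ⊆ H ∧ H ⊆ A) := by
  obtain ⟨⟨S, rfl⟩, -⟩ := hP
  constructor
  · intro h
    exact ⟨isExposed_trans_of_hull hA h, Set.empty_subset _, h.subset⟩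
  · rintro ⟨h, -, hHA⟩
    exact isExposed_restrict h hHA hA.subset

/-- The order isomorphism between the faces of a face `A` and the section `A/∅`. -/
def facesSectionIso {d : ℕ} {P A : Set (E d)} (hP : IsConvexPolytope d P)
    (hA : IsExposed ℝ P A) : Faces d A ≃o SectionFaces d P ∅ A where
  toFun x := ⟨x.1, (faces_of_face hP hA x.1).1 x.2⟩
  invFun y := ⟨y.1, (faces_of_face hP hA y.1).2 y.2⟩
  left_inv x := rfl
  right_inv y := rfl
  map_rel_iff' := Iff.rfl

lemma facesSectionIso_val {d : ℕ} {P A : Set (E d)} (hP : IsConvexPolytope d P)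
    (hA : IsExposed ℝ P A) (Φ : PolyFlag d A) :
    Subtype.val '' ((Flag.map (facesSectionIso hP hA) Φ : Flag (SectionFaces d P ∅ A)) :
        Set (SectionFaces d P ∅ A)) =
      Subtype.val '' (Φ : Set (Faces d A)) := by
  rw [Flag.coe_map]
  ext x
  constructor
  · rintro ⟨_, ⟨y, hy, rfl⟩, rfl⟩
    exact ⟨y, hy, rfl⟩
  · rintro ⟨y, hy, rfl⟩
    exact ⟨_, ⟨y, hy, rfl⟩, rfl⟩


/-- **Claim 6, first part.**
Let `P` be a two-orbit `j`-intransitive convex `d`-polytope, `G` a `k`-face and `F` an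
`l`-face of `P` with `F ⊆ G`.  If `j ≤ l` or `k ≤ j`, then the section `G/F` is
regular: here, any two of its flags are related by a symmetry of `P`.  In particular,
every `i`-face of `P` with `i ≤ j` is a regular polytope. -/
theorem section_regular_of_rank_outside (d : ℕ) (P : Set (E d))
    (hP : IsConvexPolytope d P) (j : ℤ) (hPj : IsJIntransitive d P j)
    (k l : ℤ) (F G : Set (E d))
    (hF : IsFaceOfRank d P F l) (hG : IsFaceOfRank d P G k) (hFG : F ⊆ G)
    (hjkl : j ≤ l ∨ k ≤ j) :
    (∀ Φ Ψ : SectionFlag d P F G,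
      ∃ g : E d ≃ᵢ E d, IsSymmetry d P g ∧
        (fun H : Set (E d) => g '' H) ''
            (Subtype.val '' (Φ : Set (SectionFaces d P F G))) =
          Subtype.val '' (Ψ : Set (SectionFaces d P F G))) ∧
    (∀ (i : ℤ), i ≤ j → ∀ Fi : Set (E d), IsFaceOfRank d P Fi i →
      IsRegularSet d Fi) := by
  constructor
  · intro Φ Ψ
    obtain ⟨g, hg, -, -, him⟩ := part1 hPj hF hG hFG hjkl Φ Ψ
    exact ⟨g, hg, him⟩
  · intro i hi Fi hFi
    intro Φ Ψ
    have hempty : IsFaceOfRank d P ∅ (-1) := ⟨isExposed_empty, Or.inl ⟨rfl, rfl⟩⟩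
    obtain ⟨g, hgP, -, hgFi, him⟩ := part1 hPj hempty hFi (Set.empty_subset Fi)
      (Or.inr hi) (Flag.map (facesSectionIso hP hFi.1) Φ)
      (Flag.map (facesSectionIso hP hFi.1) Ψ)
    rw [facesSectionIso_val, facesSectionIso_val] at him
    exact ⟨g, hgFi, him⟩
end
end
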